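/- For every real x with −1 < x < 1: 1/(1 − x²) ≤ sec(πx/2) ≤ (4/π)/(1 − x²), where sec denotes the secant function 1/cos. -/

import Mathlib

set_option maxHeartbeats 1000000

open Real

lemma sin_ge_sub_cube' (s : ℝ) (hs : 0 ≤ s) : s - s ^ 3 / 6 ≤ Real.sin s := by
  have key : MonotoneOn (fun t : ℝ => Real.sin t - t + t ^ 3 / 6) (Set.Ici 0) := by
    apply monotoneOn_of_deriv_nonneg (convex_Ici 0)
    · fun_prop
    · intro t ht
      exact (((Real.differentiable_sin t).sub (differentiable_id t)).add
        ((differentiable_id.pow 3).div_const 6 t)).differentiableWithinAt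
    · intro t ht
      have : deriv (fun t : ℝ => Real.sin t - t + t ^ 3 / 6) t
          = Real.cos t - 1 + t ^ 2 / 2 := by
        rw [deriv_fun_add, deriv_fun_sub, Real.deriv_sin, deriv_id'', deriv_div_const,
          deriv_pow_field]
        · ring
        · exact Real.differentiable_sin t
        · exact differentiable_id t
        · exact (Real.differentiable_sin t).sub (differentiable_id t)
        · exact ((differentiable_id.pow 3).div_const 6 t)
      rw [this]
      have := Real.one_sub_sq_div_two_le_cos (x := t)
      linarith
  have h := key (Set.self_mem_Ici) (Set.mem_Ici.mpr hs) hs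
  simp only [Real.sin_zero] at h
  nlinarith [h]

lemma key_bounds (x : ℝ) (hx0 : 0 ≤ x) (hx1 : x < 1) :
    π / 4 * (1 - x ^ 2) ≤ Real.cos (π * x / 2) ∧ Real.cos (π * x / 2) ≤ 1 - x ^ 2 := by
  have hπ1 : (3.14 : ℝ) < π := Real.pi_gt_d2
  have hπ2 : π < 3.15 := Real.pi_lt_d2
  have hθ : π * x / 2 = π / 2 - π * (1 - x) / 2 := by ring
  have hsin : Real.cos (π * x / 2) = Real.sin (π * (1 - x) / 2) := by
    rw [hθ, Real.cos_pi_div_two_sub]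
  constructor
  · -- lower bound
    rw [hsin]
    have h1 : 0 ≤ π * (1 - x) / 2 := by nlinarith
    have h2 := sin_ge_sub_cube' _ h1
    have hπsq : π ^ 2 < 9.9225 := by nlinarith
    have h12 : π ^ 2 * (1 - x) ≤ 12 := by
      nlinarith [mul_nonneg (sq_nonneg π) hx0]
    have hprod : 0 ≤ π * (1 - x) ^ 2 * (12 - π ^ 2 * (1 - x)) :=
      mul_nonneg (mul_nonneg Real.pi_pos.le (sq_nonneg _)) (by linarith)
    nlinarith [hprod]
  · rcases le_or_gt x 0.9 with hx9 | hx9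
    · -- use cos t = 1 - 2 sin^2 (t/2) and sin s ≥ s - s^3/6
      have hs0 : 0 ≤ π * x / 4 := by positivity
      have hsin2 := sin_ge_sub_cube' (π * x / 4) hs0
      have hπsq : π ^ 2 < 9.9225 := by nlinarith
      have hπ3 : π ^ 3 < 31.26 := by nlinarith [Real.pi_pos]
      have hxsq : x ^ 2 ≤ 0.81 := by nlinarith
      have hx3 : x ^ 3 ≤ 0.81 * x := by
        nlinarith [mul_le_mul_of_nonneg_left hxsq hx0]
      have hπx3 : π ^ 3 * x ^ 3 ≤ 31.26 * (0.81 * x) := by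
        nlinarith [mul_le_mul_of_nonneg_right hπ3.le (pow_nonneg hx0 3)]
      have hlin : 0.715 * x ≤ π * x / 4 - (π * x / 4) ^ 3 / 6 := by nlinarith
      have hpos : 0 ≤ π * x / 4 - (π * x / 4) ^ 3 / 6 := by nlinarith
      have hcos : Real.cos (π * x / 2) = 1 - 2 * Real.sin (π * x / 4) ^ 2 := by
        have : π * x / 2 = 2 * (π * x / 4) := by ring
        rw [this, Real.cos_two_mul, ← Real.sin_sq_add_cos_sq (π * x / 4)]
        ring
      rw [hcos]
      have hsq : (π * x / 4 - (π * x / 4) ^ 3 / 6) ^ 2 ≤ Real.sin (π * x / 4) ^ 2 := by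
        apply sq_le_sq'
        · linarith
        · exact hsin2
      have hsq2 : (0.715 * x) ^ 2 ≤ (π * x / 4 - (π * x / 4) ^ 3 / 6) ^ 2 :=
        pow_le_pow_left₀ (by positivity) hlin 2
      have h07 : (0.715 * x) ^ 2 = 0.511225 * x ^ 2 := by ring
      linarith [hsq, hsq2, sq_nonneg x]
    · -- use sin θ ≤ θ
      rw [hsin]
      have h1 : 0 ≤ π * (1 - x) / 2 := by nlinarith
      have h2 := Real.sin_le h1
      nlinarith
  
theorem sec_becker_stark (x : ℝ) (h1 : -1 < x) (h2 : x < 1) :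
    1 / (1 - x ^ 2) ≤ 1 / Real.cos (π * x / 2) ∧
    1 / Real.cos (π * x / 2) ≤ (4 / π) / (1 - x ^ 2) := by
  have hπ1 : (3.14 : ℝ) < π := Real.pi_gt_d2
  have habs : Real.cos (π * x / 2) = Real.cos (π * |x| / 2) := by
    rcases abs_cases x with ⟨h, _⟩ | ⟨h, _⟩
    · rw [h]
    · rw [h]
      rw [show π * -x / 2 = -(π * x / 2) by ring, Real.cos_neg]
  have hx2 : |x| ^ 2 = x ^ 2 := sq_abs x
  have hkey := key_bounds |x| (abs_nonneg x) (abs_lt.mpr ⟨h1, h2⟩)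
  rw [hx2, ← habs] at hkey
  obtain ⟨hlow, hhigh⟩ := hkey
  have hx1 : 0 < 1 - x ^ 2 := by nlinarith
  have hc : 0 < Real.cos (π * x / 2) := by nlinarith
  constructor
  · exact one_div_le_one_div_of_le hc hhigh
  · rw [div_le_div_iff₀ hc hx1]
    have hπ0 : 0 < π := by linarith
    rw [div_mul_eq_mul_div, le_div_iff₀ hπ0]
    nlinarith
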